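/- Let φ be a formula of the first-order language of arithmetic (with predicate symbols = and <) that is valid in every nonempty structure. If the predicate symbol < does not occur in φ, or if the predicate symbol = does not occur in φ, then i(φ) ∈ T_D, where i collapses all equality atoms to the propositional variable p, all order atoms to the propositional variable s, and erases quantifiers. -/

import Mathlib

/-- Propositional formulas built from propositional variables (indexed by `ℕ`)
using →, ∼, ∨, ∧, ≡. -/
inductive PropForm : Type
  | var : ℕ → PropForm
  | neg : PropForm → PropForm
  | imp : PropForm → PropForm → PropForm
  | disj : PropForm → PropForm → PropForm
  | conj : PropForm → PropForm → PropForm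
  | equiv : PropForm → PropForm → PropForm

/-- The implication table of the matrix 𝔐_D. -/
def fimp : Fin 3 → Fin 3 → Fin 3 := ![![1, 1, 1], ![0, 1, 0], ![0, 1, 2]]
/-- The negation table of the matrix 𝔐_D. -/
def fneg : Fin 3 → Fin 3 := ![1, 0, 2]
/-- The disjunction table of the matrix 𝔐_D. -/
def fdisj : Fin 3 → Fin 3 → Fin 3 := ![![0, 1, 0], ![1, 1, 1], ![0, 1, 2]]
/-- The conjunction table of the matrix 𝔐_D. -/
def fconj : Fin 3 → Fin 3 → Fin 3 := ![![0, 0, 0], ![0, 1, 1], ![0, 1, 2]]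
/-- The equivalence table of the matrix 𝔐_D. -/
def fequiv : Fin 3 → Fin 3 → Fin 3 := ![![1, 0, 0], ![0, 1, 0], ![0, 0, 2]]

/-- Value of a propositional formula in the matrix 𝔐_D under a valuation `v`. -/
def evalD (v : ℕ → Fin 3) : PropForm → Fin 3
  | .var n => v n
  | .neg φ => fneg (evalD v φ)
  | .imp φ ψ => fimp (evalD v φ) (evalD v ψ)
  | .disj φ ψ => fdisj (evalD v φ) (evalD v ψ)
  | .conj φ ψ => fconj (evalD v φ) (evalD v ψ)
  | .equiv φ ψ => fequiv (evalD v φ) (evalD v ψ)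

/-- T_D : the set of propositional formulas valid in 𝔐_D
(every valuation gives a designated value, i.e. 1 or 2). -/
def TD : Set PropForm := {φ | ∀ v : ℕ → Fin 3, evalD v φ = 1 ∨ evalD v φ = 2}
/-- Terms of the first-order language of arithmetic: individual variables, the
constant 1, and the binary function symbols + and ·. -/
inductive ATm : Type
  | var : ℕ → ATm
  | one : ATm
  | add : ATm → ATm → ATm
  | mul : ATm → ATm → ATm

/-- S_A : formulas of the first-order language of arithmetic, with binary predicate
symbols = and <, built using →, ∼, ∨, ∧, ≡ and quantifiers. -/
inductive AFm : Type
  | eq : ATm → ATm → AFm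
  | lt : ATm → ATm → AFm
  | neg : AFm → AFm
  | imp : AFm → AFm → AFm
  | disj : AFm → AFm → AFm
  | conj : AFm → AFm → AFm
  | equiv : AFm → AFm → AFm
  | all : ℕ → AFm → AFm
  | ex : ℕ → AFm → AFm

/-- A (nonempty) structure for the language of arithmetic: the predicate symbols
= and < and the symbols 1, +, · are interpreted arbitrarily. -/
structure AStr : Type 1 where
  M : Type
  ne : Nonempty M
  one : M
  add : M → M → M
  mul : M → M → M
  eqI : M → M → Prop
  ltI : M → M → Prop

/-- Value of an arithmetic term in a structure under an assignment. -/
def ATm.eval (S : AStr) (v : ℕ → S.M) : ATm → S.M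
  | .var x => v x
  | .one => S.one
  | .add t u => S.add (t.eval S v) (u.eval S v)
  | .mul t u => S.mul (t.eval S v) (u.eval S v)

/-- Satisfaction of an arithmetic formula in a structure under an assignment. -/
def ASat (S : AStr) (v : ℕ → S.M) : AFm → Prop
  | .eq t u => S.eqI (t.eval S v) (u.eval S v)
  | .lt t u => S.ltI (t.eval S v) (u.eval S v)
  | .neg φ => ¬ ASat S v φ
  | .imp φ ψ => ASat S v φ → ASat S v ψ
  | .disj φ ψ => ASat S v φ ∨ ASat S v ψ
  | .conj φ ψ => ASat S v φ ∧ ASat S v ψ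
  | .equiv φ ψ => (ASat S v φ ↔ ASat S v ψ)
  | .all x φ => ∀ a : S.M, ASat S (Function.update v x a) φ
  | .ex x φ => ∃ a : S.M, ASat S (Function.update v x a) φ

/-- L_2^r : the set of formulas of S_A valid in every nonempty structure
(the logical axioms of the arithmetic system). -/
def AL2 : Set AFm := {φ | ∀ (S : AStr) (v : ℕ → S.M), ASat S v φ}

/-- The map i : S_A → S_0 collapsing every equality atom to the propositional
variable `p`, every order atom to the propositional variable `s`, commuting with
all connectives and erasing quantifiers. -/
def imap (p s : ℕ) : AFm → PropForm
  | .eq _ _ => .var p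
  | .lt _ _ => .var s
  | .neg φ => .neg (imap p s φ)
  | .imp φ ψ => .imp (imap p s φ) (imap p s ψ)
  | .disj φ ψ => .disj (imap p s φ) (imap p s ψ)
  | .conj φ ψ => .conj (imap p s φ) (imap p s ψ)
  | .equiv φ ψ => .equiv (imap p s φ) (imap p s ψ)
  | .all _ φ => imap p s φ
  | .ex _ φ => imap p s φ
/-- The predicate symbol = occurs in the formula. -/
def AFm.hasEq : AFm → Prop
  | .eq _ _ => True
  | .lt _ _ => False
  | .neg φ => φ.hasEq
  | .imp φ ψ => φ.hasEq ∨ ψ.hasEq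
  | .disj φ ψ => φ.hasEq ∨ ψ.hasEq
  | .conj φ ψ => φ.hasEq ∨ ψ.hasEq
  | .equiv φ ψ => φ.hasEq ∨ ψ.hasEq
  | .all _ φ => φ.hasEq
  | .ex _ φ => φ.hasEq

/-- The predicate symbol < occurs in the formula. -/
def AFm.hasLt : AFm → Prop
  | .eq _ _ => False
  | .lt _ _ => True
  | .neg φ => φ.hasLt
  | .imp φ ψ => φ.hasLt ∨ ψ.hasLt
  | .disj φ ψ => φ.hasLt ∨ ψ.hasLt
  | .conj φ ψ => φ.hasLt ∨ ψ.hasLt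
  | .equiv φ ψ => φ.hasLt ∨ ψ.hasLt
  | .all _ φ => φ.hasLt
  | .ex _ φ => φ.hasLt


open Classical in
/-- One-element structure with eqI and ltI constantly given propositions. -/
abbrev S1 (e l : Prop) : AStr where
  M := Unit
  ne := ⟨()⟩
  one := ()
  add := fun _ _ => ()
  mul := fun _ _ => ()
  eqI := fun _ _ => e
  ltI := fun _ _ => l

lemma evalD_two_of_noLt (p s : ℕ) (v : ℕ → Fin 3) (hv : v p = 2) :
    ∀ φ : AFm, ¬ φ.hasLt → evalD v (imap p s φ) = 2 := by
  intro φ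
  induction φ with
  | eq t u => intro _; simp [imap, evalD, hv]
  | lt t u => intro h; exact absurd trivial h
  | neg φ ih => intro h; rw [imap, evalD, ih h]; decide
  | imp φ ψ ih1 ih2 =>
      intro h; rw [AFm.hasLt, not_or] at h
      rw [imap, evalD, ih1 h.1, ih2 h.2]; decide
  | disj φ ψ ih1 ih2 =>
      intro h; rw [AFm.hasLt, not_or] at h
      rw [imap, evalD, ih1 h.1, ih2 h.2]; decide
  | conj φ ψ ih1 ih2 =>
      intro h; rw [AFm.hasLt, not_or] at h
      rw [imap, evalD, ih1 h.1, ih2 h.2]; decide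
  | equiv φ ψ ih1 ih2 =>
      intro h; rw [AFm.hasLt, not_or] at h
      rw [imap, evalD, ih1 h.1, ih2 h.2]; decide
  | all x φ ih => intro h; exact ih h
  | ex x φ ih => intro h; exact ih h

lemma evalD_two_of_noEq (p s : ℕ) (v : ℕ → Fin 3) (hv : v s = 2) :
    ∀ φ : AFm, ¬ φ.hasEq → evalD v (imap p s φ) = 2 := by
  intro φ
  induction φ with
  | eq t u => intro h; exact absurd trivial h
  | lt t u => intro _; simp [imap, evalD, hv]
  | neg φ ih => intro h; rw [imap, evalD, ih h]; decide
  | imp φ ψ ih1 ih2 =>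
      intro h; rw [AFm.hasEq, not_or] at h
      rw [imap, evalD, ih1 h.1, ih2 h.2]; decide
  | disj φ ψ ih1 ih2 =>
      intro h; rw [AFm.hasEq, not_or] at h
      rw [imap, evalD, ih1 h.1, ih2 h.2]; decide
  | conj φ ψ ih1 ih2 =>
      intro h; rw [AFm.hasEq, not_or] at h
      rw [imap, evalD, ih1 h.1, ih2 h.2]; decide
  | equiv φ ψ ih1 ih2 =>
      intro h; rw [AFm.hasEq, not_or] at h
      rw [imap, evalD, ih1 h.1, ih2 h.2]; decide
  | all x φ ih => intro h; exact ih h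
  | ex x φ ih => intro h; exact ih h

open Classical in
lemma evalD_ite_of_noLt (p s : ℕ) (e : Prop) (v : ℕ → Fin 3)
    (hv : v p = if e then 1 else 0) :
    ∀ φ : AFm, ¬ φ.hasLt → ∀ w : ℕ → Unit,
      evalD v (imap p s φ) = if ASat (S1 e False) w φ then 1 else 0 := by
  intro φ
  induction φ with
  | eq t u => intro _ w; simp only [imap, evalD]; exact hv
  | lt t u => intro h; exact absurd trivial h
  | neg φ ih =>
      intro h w
      rw [imap, evalD, ih h w]
      by_cases hA : ASat (S1 e False) w φ <;> simp [ASat, hA] <;> decide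
  | imp φ ψ ih1 ih2 =>
      intro h w; rw [AFm.hasLt, not_or] at h
      rw [imap, evalD, ih1 h.1 w, ih2 h.2 w]
      by_cases hA : ASat (S1 e False) w φ <;>
        by_cases hB : ASat (S1 e False) w ψ <;> simp [ASat, hA, hB] <;> decide
  | disj φ ψ ih1 ih2 =>
      intro h w; rw [AFm.hasLt, not_or] at h
      rw [imap, evalD, ih1 h.1 w, ih2 h.2 w]
      by_cases hA : ASat (S1 e False) w φ <;>
        by_cases hB : ASat (S1 e False) w ψ <;> simp [ASat, hA, hB] <;> decide
  | conj φ ψ ih1 ih2 =>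
      intro h w; rw [AFm.hasLt, not_or] at h
      rw [imap, evalD, ih1 h.1 w, ih2 h.2 w]
      by_cases hA : ASat (S1 e False) w φ <;>
        by_cases hB : ASat (S1 e False) w ψ <;> simp [ASat, hA, hB] <;> decide
  | equiv φ ψ ih1 ih2 =>
      intro h w; rw [AFm.hasLt, not_or] at h
      rw [imap, evalD, ih1 h.1 w, ih2 h.2 w]
      by_cases hA : ASat (S1 e False) w φ <;>
        by_cases hB : ASat (S1 e False) w ψ <;> simp [ASat, hA, hB] <;> decide
  | all x φ ih =>
      intro h w
      have hup : ∀ a : Unit, Function.update w x a = w :=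
        fun a => Subsingleton.elim _ _
      simp only [imap, ASat, hup, forall_const]
      exact ih h w
  | ex x φ ih =>
      intro h w
      have hup : ∀ a : Unit, Function.update w x a = w :=
        fun a => Subsingleton.elim _ _
      simp only [imap, ASat, hup, exists_const]
      exact ih h w

open Classical in
lemma evalD_ite_of_noEq (p s : ℕ) (e : Prop) (v : ℕ → Fin 3)
    (hv : v s = if e then 1 else 0) :
    ∀ φ : AFm, ¬ φ.hasEq → ∀ w : ℕ → Unit,
      evalD v (imap p s φ) = if ASat (S1 False e) w φ then 1 else 0 := by
  intro φ
  induction φ with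
  | eq t u => intro h; exact absurd trivial h
  | lt t u => intro _ w; simp only [imap, evalD]; exact hv
  | neg φ ih =>
      intro h w
      rw [imap, evalD, ih h w]
      by_cases hA : ASat (S1 False e) w φ <;> simp [ASat, hA] <;> decide
  | imp φ ψ ih1 ih2 =>
      intro h w; rw [AFm.hasEq, not_or] at h
      rw [imap, evalD, ih1 h.1 w, ih2 h.2 w]
      by_cases hA : ASat (S1 False e) w φ <;>
        by_cases hB : ASat (S1 False e) w ψ <;> simp [ASat, hA, hB] <;> decide
  | disj φ ψ ih1 ih2 =>
      intro h w; rw [AFm.hasEq, not_or] at h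
      rw [imap, evalD, ih1 h.1 w, ih2 h.2 w]
      by_cases hA : ASat (S1 False e) w φ <;>
        by_cases hB : ASat (S1 False e) w ψ <;> simp [ASat, hA, hB] <;> decide
  | conj φ ψ ih1 ih2 =>
      intro h w; rw [AFm.hasEq, not_or] at h
      rw [imap, evalD, ih1 h.1 w, ih2 h.2 w]
      by_cases hA : ASat (S1 False e) w φ <;>
        by_cases hB : ASat (S1 False e) w ψ <;> simp [ASat, hA, hB] <;> decide
  | equiv φ ψ ih1 ih2 =>
      intro h w; rw [AFm.hasEq, not_or] at h
      rw [imap, evalD, ih1 h.1 w, ih2 h.2 w]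
      by_cases hA : ASat (S1 False e) w φ <;>
        by_cases hB : ASat (S1 False e) w ψ <;> simp [ASat, hA, hB] <;> decide
  | all x φ ih =>
      intro h w
      have hup : ∀ a : Unit, Function.update w x a = w :=
        fun a => Subsingleton.elim _ _
      simp only [imap, ASat, hup, forall_const]
      exact ih h w
  | ex x φ ih =>
      intro h w
      have hup : ∀ a : Unit, Function.update w x a = w :=
        fun a => Subsingleton.elim _ _
      simp only [imap, ASat, hup, exists_const]
      exact ih h w

/-- if φ is a formula of the language of arithmetic valid in every
nonempty structure and the predicate symbol < does not occur in φ, or the predicate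
symbol = does not occur in φ, then i(φ) ∈ T_D (where p and s are two fixed distinct
propositional variables). -/
theorem imap_mem_TD_of_single_predicate (p s : ℕ) (hps : p ≠ s)
    (φ : AFm) (hφ : φ ∈ AL2) (h : ¬ φ.hasLt ∨ ¬ φ.hasEq) :
    imap p s φ ∈ TD := by
  intro v
  rcases h with hlt | heq
  · by_cases h2 : v p = 2
    · right; exact evalD_two_of_noLt p s v h2 φ hlt
    · left
      have hv : v p = @ite (Fin 3) (v p = 1) (Classical.propDecidable _) 1 0 := by
        by_cases hh : v p = 1 <;> simp [hh] <;> omega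
      rw [evalD_ite_of_noLt p s (v p = 1) v hv φ hlt (fun _ => ()),
        if_pos (hφ (S1 (v p = 1) False) (fun _ => ()))]
  · by_cases h2 : v s = 2
    · right; exact evalD_two_of_noEq p s v h2 φ heq
    · left
      have hv : v s = @ite (Fin 3) (v s = 1) (Classical.propDecidable _) 1 0 := by
        by_cases hh : v s = 1 <;> simp [hh] <;> omega
      rw [evalD_ite_of_noEq p s (v s = 1) v hv φ heq (fun _ => ()),
        if_pos (hφ (S1 False (v s = 1)) (fun _ => ()))]
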